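/- Let T be a spherically homogeneous rooted tree, let G ≤ Aut(T) be a weakly branch group, let H ≤ G be a subgroup of finite index in G, and let K be a normal subgroup of H such that rist_K(v) is nontrivial for every vertex v of T. Then there exists n ∈ ℕ such that rist_G'(n) ≤ K. -/

import Mathlib

open scoped Pointwise

/-! ## Spherically homogeneous rooted trees -/

/-- A vertex of the spherically homogeneous rooted tree over the shifted sequence of
alphabets `i ↦ A (i + k)`: a finite word whose `j`-th letter belongs to `A (j + k)`. -/
def Vtx (A : ℕ → Type*) (k : ℕ) : Type _ :=
  {l : List (Σ i, A i) // ∀ j (h : j < l.length), (l[j]'h).1 = j + k}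

namespace Vtx

variable {A : ℕ → Type*}

/-- The length of a vertex (the distance to the root). -/
def len {k : ℕ} (v : Vtx A k) : ℕ := v.1.length

/-- The prefix relation on vertices. -/
def Pre {k : ℕ} (v w : Vtx A k) : Prop := v.1 <+: w.1

/-- The `n`-th level of the tree: all vertices of length `n`. -/
def level (A : ℕ → Type*) (k : ℕ) (n : ℕ) : Set (Vtx A k) := {v | v.len = n}

/-- Concatenation of a vertex of the tree with a word over the shifted alphabets. -/
def cat (v : Vtx A 0) (w : Vtx A v.len) : Vtx A 0 :=
  ⟨v.1 ++ w.1, by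
    intro j h
    by_cases hj : j < v.1.length
    · rw [List.getElem_append_left hj]
      exact v.2 j hj
    · push_neg at hj
      rw [List.getElem_append_right hj]
      have h2 : j - v.1.length < w.1.length := by
        have h3 := h
        simp only [List.length_append] at h3
        omega
      exact (w.2 (j - v.1.length) h2).trans
        (by show j - v.1.length + v.1.length = j + 0; omega)⟩

/-- Deleting a prefix of length `n` from a vertex. -/
def dropPre (n : ℕ) (u : Vtx A 0) : Vtx A n :=
  ⟨u.1.drop n, by
    intro j h
    have h' : n + j < u.1.length := by
      simp only [List.length_drop] at h
      omega
    rw [List.getElem_drop]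
    exact (u.2 (n + j) h').trans (by omega)⟩

end Vtx

/-- The full automorphism group of the rooted tree `T_k`:
bijections of the vertex set preserving word length and the prefix relation. -/
def treeAut (A : ℕ → Type*) (k : ℕ) : Subgroup (Equiv.Perm (Vtx A k)) where
  carrier := {f | (∀ v, (f v).len = v.len) ∧ ∀ v w, Vtx.Pre (f v) (f w) ↔ Vtx.Pre v w}
  one_mem' := ⟨fun _ => rfl, fun _ _ => Iff.rfl⟩
  mul_mem' := by
    rintro f g ⟨hf1, hf2⟩ ⟨hg1, hg2⟩
    constructor
    · intro v
      have : (f * g) v = f (g v) := rfl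
      rw [this]
      exact (hf1 (g v)).trans (hg1 v)
    · intro v w
      have e1 : (f * g) v = f (g v) := rfl
      have e2 : (f * g) w = f (g w) := rfl
      rw [e1, e2]
      exact (hf2 (g v) (g w)).trans (hg2 v w)
  inv_mem' := by
    rintro f ⟨hf1, hf2⟩
    constructor
    · intro v
      conv_rhs => rw [← Equiv.apply_symm_apply f v]
      exact (hf1 _).symm
    · intro v w
      conv_rhs => rw [← Equiv.apply_symm_apply f v, ← Equiv.apply_symm_apply f w]
      exact (hf2 _ _).symm

variable {A : ℕ → Type*}

/-- The stabiliser `St_H(v)` of a vertex `v` in a subgroup `H ≤ Perm`. -/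
def vstab {k : ℕ} (H : Subgroup (Equiv.Perm (Vtx A k))) (v : Vtx A k) :
    Subgroup (Equiv.Perm (Vtx A k)) where
  carrier := {g | g ∈ H ∧ g v = v}
  one_mem' := ⟨H.one_mem, rfl⟩
  mul_mem' := by
    rintro a b ⟨ha, ha'⟩ ⟨hb, hb'⟩
    refine ⟨H.mul_mem ha hb, ?_⟩
    have : (a * b) v = a (b v) := rfl
    rw [this, hb', ha']
  inv_mem' := by
    rintro a ⟨ha, ha'⟩
    refine ⟨H.inv_mem ha, ?_⟩
    conv_lhs => rw [← ha']
    exact Equiv.symm_apply_apply a v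

/-- The stabiliser `St_H(n)` of the `n`-th level. -/
def levStab {k : ℕ} (H : Subgroup (Equiv.Perm (Vtx A k))) (n : ℕ) :
    Subgroup (Equiv.Perm (Vtx A k)) where
  carrier := {g | g ∈ H ∧ ∀ v : Vtx A k, v.len = n → g v = v}
  one_mem' := ⟨H.one_mem, fun _ _ => rfl⟩
  mul_mem' := by
    rintro a b ⟨ha, ha'⟩ ⟨hb, hb'⟩
    refine ⟨H.mul_mem ha hb, fun v hv => ?_⟩
    have : (a * b) v = a (b v) := rfl
    rw [this, hb' v hv, ha' v hv]
  inv_mem' := by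
    rintro a ⟨ha, ha'⟩
    refine ⟨H.inv_mem ha, fun v hv => ?_⟩
    conv_lhs => rw [← ha' v hv]
    exact Equiv.symm_apply_apply a v

/-- The rigid stabiliser `rist_H(v)`: elements of `H` fixing every vertex that does not
have `v` as a prefix. -/
def rist {k : ℕ} (H : Subgroup (Equiv.Perm (Vtx A k))) (v : Vtx A k) :
    Subgroup (Equiv.Perm (Vtx A k)) where
  carrier := {g | g ∈ H ∧ ∀ w : Vtx A k, ¬ Vtx.Pre v w → g w = w}
  one_mem' := ⟨H.one_mem, fun _ _ => rfl⟩
  mul_mem' := by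
    rintro a b ⟨ha, ha'⟩ ⟨hb, hb'⟩
    refine ⟨H.mul_mem ha hb, fun w hw => ?_⟩
    have : (a * b) w = a (b w) := rfl
    rw [this, hb' w hw, ha' w hw]
  inv_mem' := by
    rintro a ⟨ha, ha'⟩
    refine ⟨H.inv_mem ha, fun w hw => ?_⟩
    conv_lhs => rw [← ha' w hw]
    exact Equiv.symm_apply_apply a w

/-- The rigid level stabiliser `rist_H(n)`: the subgroup generated by the rigid
stabilisers of the vertices on the `n`-th level. -/
def ristLev {k : ℕ} (H : Subgroup (Equiv.Perm (Vtx A k))) (n : ℕ) :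
    Subgroup (Equiv.Perm (Vtx A k)) :=
  ⨆ v ∈ {v : Vtx A k | v.len = n}, rist H v

/-- `G` acts spherically transitively: transitively on every level of the tree. -/
def SphTrans {k : ℕ} (G : Subgroup (Equiv.Perm (Vtx A k))) : Prop :=
  ∀ v w : Vtx A k, v.len = w.len → ∃ g ∈ G, g v = w

/-- `G ≤ Aut(T_k)` is a branch group. -/
structure IsBranch {k : ℕ} (G : Subgroup (Equiv.Perm (Vtx A k))) : Prop where
  le_aut : G ≤ treeAut A k
  trans : SphTrans G
  rist_fi : ∀ n : ℕ, (ristLev G n).relIndex G ≠ 0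

/-- `G ≤ Aut(T_k)` is a weakly branch group. -/
structure IsWeaklyBranch {k : ℕ} (G : Subgroup (Equiv.Perm (Vtx A k))) : Prop where
  le_aut : G ≤ treeAut A k
  trans : SphTrans G
  rist_nt : ∀ n : ℕ, ristLev G n ≠ ⊥

/-! ## Sections -/

namespace Vtx

theorem dropPre_cat (v : Vtx A 0) (w : Vtx A v.len) : dropPre v.len (cat v w) = w := by
  apply Subtype.ext
  show (v.1 ++ w.1).drop v.1.length = w.1
  exact List.drop_left

theorem pre_cat (v : Vtx A 0) (w : Vtx A v.len) : Pre v (cat v w) := ⟨w.1, rfl⟩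

theorem cat_dropPre {v u : Vtx A 0} (h : Pre v u) : cat v (dropPre v.len u) = u := by
  apply Subtype.ext
  show v.1 ++ u.1.drop v.1.length = u.1
  obtain ⟨t, ht⟩ := h
  rw [← ht, List.drop_left]

end Vtx

/-- The section map `φ_v` at the level of plain functions. -/
def secFun (v : Vtx A 0) (f : Equiv.Perm (Vtx A 0)) : Vtx A v.len → Vtx A v.len :=
  fun w => Vtx.dropPre v.len (f (Vtx.cat v w))

theorem secFun_key {v : Vtx A 0} {f : Equiv.Perm (Vtx A 0)}
    (hf : f ∈ vstab (treeAut A 0) v) (w : Vtx A v.len) :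
    Vtx.cat v (secFun v f w) = f (Vtx.cat v w) := by
  obtain ⟨⟨hlen, hpre⟩, hfix⟩ := hf
  apply Vtx.cat_dropPre
  have := (hpre v (Vtx.cat v w))
  rw [hfix] at this
  exact this.mpr (Vtx.pre_cat v w)

theorem secFun_mul {v : Vtx A 0} {f g : Equiv.Perm (Vtx A 0)}
    (hf : f ∈ vstab (treeAut A 0) v) (hg : g ∈ vstab (treeAut A 0) v) :
    secFun v (f * g) = secFun v f ∘ secFun v g := by
  funext w
  show Vtx.dropPre v.len ((f * g) (Vtx.cat v w)) = Vtx.dropPre v.len (f (Vtx.cat v (secFun v g w)))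
  rw [secFun_key hg w]
  rfl

theorem secFun_one (v : Vtx A 0) : secFun v (1 : Equiv.Perm (Vtx A 0)) = id := by
  funext w
  show Vtx.dropPre v.len ((1 : Equiv.Perm (Vtx A 0)) (Vtx.cat v w)) = w
  rw [Equiv.Perm.one_apply]
  exact Vtx.dropPre_cat v w

theorem secFun_bij {v : Vtx A 0} {f : Equiv.Perm (Vtx A 0)}
    (hf : f ∈ vstab (treeAut A 0) v) : Function.Bijective (secFun v f) := by
  rw [Function.bijective_iff_has_inverse]
  refine ⟨secFun v f⁻¹, fun w => ?_, fun w => ?_⟩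
  · have h1 := congrFun (secFun_mul (inv_mem hf) hf) w
    rw [inv_mul_cancel, secFun_one] at h1
    exact h1.symm
  · have h1 := congrFun (secFun_mul hf (inv_mem hf)) w
    rw [mul_inv_cancel, secFun_one] at h1
    exact h1.symm

open Classical in
noncomputable def secPerm (v : Vtx A 0) (f : Equiv.Perm (Vtx A 0)) :
    Equiv.Perm (Vtx A v.len) :=
  if h : Function.Bijective (secFun v f) then Equiv.ofBijective _ h else 1

theorem secPerm_coe {v : Vtx A 0} {f : Equiv.Perm (Vtx A 0)}
    (hf : f ∈ vstab (treeAut A 0) v) : ⇑(secPerm v f) = secFun v f := by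
  unfold secPerm
  rw [dif_pos (secFun_bij hf)]
  rfl

/-- The section homomorphism `φ_v : St_{Aut(T)}(v) → Perm(T_{|v|})`. -/
noncomputable def phiHom (v : Vtx A 0) :
    ↥(vstab (treeAut A 0) v) →* Equiv.Perm (Vtx A v.len) where
  toFun f := secPerm v f.1
  map_one' := by
    apply Equiv.ext
    intro w
    show secPerm v (1 : Equiv.Perm (Vtx A 0)) w = (1 : Equiv.Perm (Vtx A v.len)) w
    rw [secPerm_coe (one_mem (vstab (treeAut A 0) v)), secFun_one]
    rfl
  map_mul' := by
    intro f g
    apply Equiv.ext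
    intro w
    show secPerm v (f.1 * g.1) w = (secPerm v f.1 * secPerm v g.1) w
    have e : (secPerm v f.1 * secPerm v g.1) w = secPerm v f.1 (secPerm v g.1 w) := rfl
    rw [e, secPerm_coe (mul_mem f.2 g.2), secPerm_coe f.2, secPerm_coe g.2,
      secFun_mul f.2 g.2]
    rfl

/-- The image `φ_v(St_H(v)) ≤ Perm(T_{|v|})` of the stabiliser of `v` in `H` under the
section homomorphism at `v`; for `H ≤ G ≤ Aut(T)` this is the subgroup written `H_v`. -/
noncomputable def secSub (v : Vtx A 0) (H : Subgroup (Equiv.Perm (Vtx A 0))) :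
    Subgroup (Equiv.Perm (Vtx A v.len)) :=
  Subgroup.map (phiHom v) ((vstab H v).subgroupOf (vstab (treeAut A 0) v))

/-- A subgroup `H ≤ G` has finite bi-index if the set of double cosets
`{HgH : g ∈ G}` is finite. -/
def FiniteBiIndex {G : Type*} [Group G] (H : Subgroup G) : Prop :=
  {S : Set G | ∃ g : G, S = (H : Set G) * {g} * (H : Set G)}.Finite

/-- The set of double cosets of a subgroup `H` of a group `M` with representatives in a
subgroup `G` of `M`; for `H ≤ G` this is the set of double cosets `H\G/H`. -/
def doubleCosets {M : Type*} [Group M] (G H : Subgroup M) : Set (Set M) :=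
  {S : Set M | ∃ g ∈ G, S = (H : Set M) * {g} * (H : Set M)}

/-- The pro-normal closure of a subgroup `H ≤ G`: the intersection of the subsets `HN`,
over all nontrivial normal subgroups `N` of `G`. -/
def pronormalClosure {G : Type*} [Group G] (H : Subgroup G) : Subgroup G where
  carrier := ⋂ N ∈ {N : Subgroup G | N.Normal ∧ N ≠ ⊥}, (H : Set G) * (N : Set G)
  one_mem' := by
    simp only [Set.mem_iInter]
    rintro N ⟨hN, -⟩
    exact ⟨1, H.one_mem, 1, N.one_mem, mul_one 1⟩
  mul_mem' := by
    intro a b ha hb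
    simp only [Set.mem_iInter] at ha hb ⊢
    rintro N hN
    obtain ⟨h₁, hh₁, n₁, hn₁, rfl⟩ := ha N hN
    obtain ⟨h₂, hh₂, n₂, hn₂, rfl⟩ := hb N hN
    refine ⟨h₁ * h₂, H.mul_mem hh₁ hh₂, (h₂⁻¹ * n₁ * h₂) * n₂, ?_, by group⟩
    refine N.mul_mem ?_ hn₂
    have := hN.1.conj_mem n₁ hn₁ h₂⁻¹
    simpa using this
  inv_mem' := by
    intro a ha
    simp only [Set.mem_iInter] at ha ⊢
    rintro N hN
    obtain ⟨h, hh, n, hn, rfl⟩ := ha N hN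
    refine ⟨h⁻¹, H.inv_mem hh, h * n⁻¹ * h⁻¹, hN.1.conj_mem n⁻¹ (N.inv_mem hn) h, by group⟩

/-- A subgroup `H ≤ G` is quasi-prodense if its pro-normal closure has finite index. -/
def QuasiProdense {G : Type*} [Group G] (H : Subgroup G) : Prop :=
  (pronormalClosure H).index ≠ 0

/-- `K` is a normal subgroup of the subgroup `H` (both subgroups of an ambient group). -/
def NormalIn {M : Type*} [Group M] (H K : Subgroup M) : Prop :=
  K ≤ H ∧ ∀ h ∈ H, ∀ k ∈ K, h * k * h⁻¹ ∈ K

/-- `K` is a subnormal subgroup of the subgroup `H`. -/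
def SubnormalIn {M : Type*} [Group M] (H K : Subgroup M) : Prop :=
  ∃ (m : ℕ) (c : ℕ → Subgroup M), c 0 = K ∧ c m = H ∧ ∀ i < m, NormalIn (c (i + 1)) (c i)

/-- The iterated derived subgroups of a subgroup. -/
def iterDerived {M : Type*} [Group M] (H : Subgroup M) : ℕ → Subgroup M
  | 0 => H
  | (k + 1) => ⁅iterDerived H k, iterDerived H k⁆

theorem Equiv.Perm.apply_inv_self {α : Type*} (f : Equiv.Perm α) (x : α) : f (f⁻¹ x) = x :=
  Equiv.apply_symm_apply f x

theorem Equiv.Perm.inv_apply_self {α : Type*} (f : Equiv.Perm α) (x : α) : f⁻¹ (f x) = x :=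
  Equiv.symm_apply_apply f x

/-! ## Auxiliary development for the main theorem -/

section Aux

open Vtx

variable {A : ℕ → Type*}

private lemma pre_trans {k : ℕ} {u v w : Vtx A k} (h1 : Vtx.Pre u v) (h2 : Vtx.Pre v w) :
    Vtx.Pre u w := List.IsPrefix.trans h1 h2

private lemma pre_eq_of_len {k : ℕ} {u v : Vtx A k} (h : Vtx.Pre u v) (hl : u.len = v.len) :
    u = v := Subtype.ext (List.IsPrefix.eq_of_length h hl)

private lemma pre_or_pre {k : ℕ} {u v w : Vtx A k} (h1 : Vtx.Pre u w) (h2 : Vtx.Pre v w) :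
    Vtx.Pre u v ∨ Vtx.Pre v u := by
  rcases Nat.le_total u.1.length v.1.length with h | h
  · exact Or.inl (List.prefix_of_prefix_length_le h1 h2 h)
  · exact Or.inr (List.prefix_of_prefix_length_le h2 h1 h)

private lemma incomp_of_len {k : ℕ} {u v : Vtx A k} (hl : u.len = v.len) (hne : u ≠ v) :
    ¬ Vtx.Pre u v := fun h => hne (pre_eq_of_len h hl)

/-- The permutation `x` is supported on the subtree below `u`. -/
def SuppIn (x : Equiv.Perm (Vtx A 0)) (u : Vtx A 0) : Prop :=
  ∀ w, ¬ Vtx.Pre u w → x w = w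

lemma SuppIn.inv {x : Equiv.Perm (Vtx A 0)} {u : Vtx A 0} (h : SuppIn x u) : SuppIn x⁻¹ u := by
  intro w hw
  conv_lhs => rw [← h w hw]
  exact Equiv.Perm.inv_apply_self x w

lemma SuppIn.zone {x : Equiv.Perm (Vtx A 0)} {u w : Vtx A 0} (h : SuppIn x u)
    (hw : Vtx.Pre u w) : Vtx.Pre u (x w) := by
  by_contra hc
  have h2 := h.inv (x w) hc
  rw [Equiv.Perm.inv_apply_self] at h2
  rw [← h2] at hc
  exact hc hw

lemma commute_of_incomp {x y : Equiv.Perm (Vtx A 0)} {u u' : Vtx A 0}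
    (hx : SuppIn x u) (hy : SuppIn y u') (h1 : ¬ Vtx.Pre u u') (h2 : ¬ Vtx.Pre u' u) :
    x * y = y * x := by
  have key : ∀ w : Vtx A 0, Vtx.Pre u w → ¬ Vtx.Pre u' w := by
    intro w hw hw'
    rcases pre_or_pre hw hw' with h | h
    exacts [h1 h, h2 h]
  have key' : ∀ w : Vtx A 0, Vtx.Pre u' w → ¬ Vtx.Pre u w := by
    intro w hw hw'
    rcases pre_or_pre hw' hw with h | h
    exacts [h1 h, h2 h]
  apply Equiv.ext
  intro w
  rw [Equiv.Perm.mul_apply, Equiv.Perm.mul_apply]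
  by_cases hu : Vtx.Pre u w
  · rw [hy w (key w hu), hy (x w) (key (x w) (hx.zone hu))]
  · by_cases hu' : Vtx.Pre u' w
    · rw [hx w hu, hx (y w) (key' (y w) (hy.zone hu'))]
    · rw [hy w hu', hx w hu]
      exact (hy w hu').symm

lemma mem_rist' {k : ℕ} {S : Subgroup (Equiv.Perm (Vtx A k))} {v g} :
    g ∈ rist S v ↔ g ∈ S ∧ ∀ w, ¬ Vtx.Pre v w → g w = w := Iff.rfl

lemma mem_treeAut' {k : ℕ} {g} :
    g ∈ treeAut A k ↔ (∀ v : Vtx A k, (g v).len = v.len) ∧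
      ∀ v w, Vtx.Pre (g v) (g w) ↔ Vtx.Pre v w := Iff.rfl

lemma rist_le' {k : ℕ} {S : Subgroup (Equiv.Perm (Vtx A k))} {v} : rist S v ≤ S :=
  fun _ h => (mem_rist'.mp h).1

lemma rist_suppIn {S : Subgroup (Equiv.Perm (Vtx A 0))} {v : Vtx A 0} {g}
    (h : g ∈ rist S v) : SuppIn g v := (mem_rist'.mp h).2

lemma rist_mono' {S : Subgroup (Equiv.Perm (Vtx A 0))} {v u : Vtx A 0} (h : Vtx.Pre v u) :
    rist S u ≤ rist S v := by
  intro x hx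
  obtain ⟨h1, h2⟩ := mem_rist'.mp hx
  exact mem_rist'.mpr ⟨h1, fun w hw => h2 w fun hh => hw (pre_trans h hh)⟩

/-- The subgroup of elements of `G` all of whose `G`-conjugates lie in `H`
(the normal core of `H` relative to `G`, inside the ambient group). -/
def Cgrp (G H : Subgroup (Equiv.Perm (Vtx A 0))) : Subgroup (Equiv.Perm (Vtx A 0)) where
  carrier := {x | x ∈ G ∧ ∀ c ∈ G, c * x * c⁻¹ ∈ H}
  one_mem' := ⟨G.one_mem, fun c _ => by simpa using H.one_mem⟩
  mul_mem' := by
    rintro a b ⟨haG, ha⟩ ⟨hbG, hb⟩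
    refine ⟨G.mul_mem haG hbG, fun c hc => ?_⟩
    have h := H.mul_mem (ha c hc) (hb c hc)
    convert h using 1
    group
  inv_mem' := by
    rintro a ⟨haG, ha⟩
    refine ⟨G.inv_mem haG, fun c hc => ?_⟩
    have h := H.inv_mem (ha c hc)
    convert h using 1
    group

lemma mem_Cgrp {G H : Subgroup (Equiv.Perm (Vtx A 0))} {x} :
    x ∈ Cgrp G H ↔ x ∈ G ∧ ∀ c ∈ G, c * x * c⁻¹ ∈ H := Iff.rfl

lemma Cgrp_le_G {G H : Subgroup (Equiv.Perm (Vtx A 0))} : Cgrp G H ≤ G :=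
  fun _ hx => (mem_Cgrp.mp hx).1

lemma Cgrp_le_H {G H : Subgroup (Equiv.Perm (Vtx A 0))} : Cgrp G H ≤ H := by
  intro x hx
  have h := (mem_Cgrp.mp hx).2 1 G.one_mem
  simpa using h

lemma Cgrp_conj {G H : Subgroup (Equiv.Perm (Vtx A 0))} {d x : Equiv.Perm (Vtx A 0)}
    (hd : d ∈ G) (hx : x ∈ Cgrp G H) : d * x * d⁻¹ ∈ Cgrp G H := by
  obtain ⟨hxG, hx2⟩ := mem_Cgrp.mp hx
  refine mem_Cgrp.mpr ⟨G.mul_mem (G.mul_mem hd hxG) (G.inv_mem hd), fun c hc => ?_⟩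
  have h := hx2 (c * d) (G.mul_mem hc hd)
  convert h using 1
  group

/-- The conjugate subgroup `c S c⁻¹`. -/
def conjSub (c : Equiv.Perm (Vtx A 0)) (S : Subgroup (Equiv.Perm (Vtx A 0))) :
    Subgroup (Equiv.Perm (Vtx A 0)) where
  carrier := {x | c⁻¹ * x * c ∈ S}
  one_mem' := by
    have h : c⁻¹ * 1 * c = 1 := by group
    show c⁻¹ * 1 * c ∈ S
    rw [h]; exact S.one_mem
  mul_mem' := by
    intro a b ha hb
    show c⁻¹ * (a * b) * c ∈ S
    have h : c⁻¹ * (a * b) * c = (c⁻¹ * a * c) * (c⁻¹ * b * c) := by group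
    rw [h]; exact S.mul_mem ha hb
  inv_mem' := by
    intro a ha
    show c⁻¹ * a⁻¹ * c ∈ S
    have h : c⁻¹ * a⁻¹ * c = (c⁻¹ * a * c)⁻¹ := by group
    rw [h]; exact S.inv_mem ha

lemma mem_conjSub {c x : Equiv.Perm (Vtx A 0)} {S : Subgroup (Equiv.Perm (Vtx A 0))} :
    x ∈ conjSub c S ↔ c⁻¹ * x * c ∈ S := Iff.rfl

/-- A "good" subgroup: contained in the core `C`, conjugation-closed under `C`,
with nontrivial rigid stabilisers everywhere. -/
structure GoodS (G H S : Subgroup (Equiv.Perm (Vtx A 0))) : Prop where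
  leC : S ≤ Cgrp G H
  conjC : ∀ c ∈ Cgrp G H, ∀ s ∈ S, c * s * c⁻¹ ∈ S
  rists : ∀ v : Vtx A 0, ∃ x ∈ S, x ≠ 1 ∧ SuppIn x v

lemma GoodS.inf {G H S T : Subgroup (Equiv.Perm (Vtx A 0))} (hGa : G ≤ treeAut A 0)
    (hS : GoodS G H S) (hT : GoodS G H T) : GoodS G H (S ⊓ T) := by
  constructor
  · exact le_trans inf_le_left hS.leC
  · intro c hc s hs
    rw [Subgroup.mem_inf] at hs ⊢
    exact ⟨hS.conjC c hc s hs.1, hT.conjC c hc s hs.2⟩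
  · intro v
    obtain ⟨g2, hg2T, hg2ne, hg2s⟩ := hT.rists v
    obtain ⟨y, hy⟩ : ∃ y, g2 y ≠ y := by
      by_contra hcon
      push_neg at hcon
      exact hg2ne (Equiv.ext hcon)
    have hvy : Vtx.Pre v y := by
      by_contra hc
      exact hy (hg2s y hc)
    obtain ⟨g1, hg1S, hg1ne, hg1s⟩ := hS.rists y
    have hg2C : g2 ∈ Cgrp G H := hT.leC hg2T
    have hg1C : g1 ∈ Cgrp G H := hS.leC hg1S
    refine ⟨g2 * g1 * g2⁻¹ * g1⁻¹, ?_, ?_, ?_⟩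
    · rw [Subgroup.mem_inf]
      constructor
      · exact S.mul_mem (hS.conjC g2 hg2C g1 hg1S) (S.inv_mem hg1S)
      · have h1 : g1 * g2⁻¹ * g1⁻¹ ∈ T := hT.conjC g1 hg1C g2⁻¹ (T.inv_mem hg2T)
        have h2 := T.mul_mem hg2T h1
        convert h2 using 1
        group
    · intro hone
      have h2 : g2 * g1 * g2⁻¹ = g1 := by
        calc g2 * g1 * g2⁻¹ = g2 * g1 * g2⁻¹ * g1⁻¹ * g1 := by group
        _ = g1 := by rw [hone]; group
      obtain ⟨w0, hw0⟩ : ∃ w0, g1 w0 ≠ w0 := by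
        by_contra hcon
        push_neg at hcon
        exact hg1ne (Equiv.ext hcon)
      have hyw0 : Vtx.Pre y w0 := by
        by_contra hc
        exact hw0 (hg1s w0 hc)
      have hga : g2 ∈ treeAut A 0 := hGa (Cgrp_le_G hg2C)
      have heq : g1 (g2 w0) = g2 (g1 w0) := by
        have h3 : (g2 * g1 * g2⁻¹) (g2 w0) = g1 (g2 w0) := by rw [h2]
        rw [Equiv.Perm.mul_apply, Equiv.Perm.mul_apply, Equiv.Perm.inv_apply_self] at h3
        exact h3.symm
      have hmv : g1 (g2 w0) ≠ g2 w0 := by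
        rw [heq]
        exact fun hh => hw0 (g2.injective hh)
      have hy1 : Vtx.Pre y (g2 w0) := by
        by_contra hc
        exact hmv (hg1s _ hc)
      have hy2 : Vtx.Pre (g2 y) (g2 w0) := ((mem_treeAut'.mp hga).2 y w0).mpr hyw0
      have hlen : (g2 y).len = y.len := (mem_treeAut'.mp hga).1 y
      have hfin : g2 y = y := by
        rcases pre_or_pre hy2 hy1 with h | h
        · exact pre_eq_of_len h hlen
        · exact (pre_eq_of_len h hlen.symm).symm
      exact hy hfin
    · intro w hw
      have hyw : ¬ Vtx.Pre y w := fun hh => hw (pre_trans hvy hh)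
      rw [Equiv.Perm.mul_apply, Equiv.Perm.mul_apply, Equiv.Perm.mul_apply]
      rw [hg1s.inv w hyw, hg2s.inv w hw, hg1s w hyw, hg2s w hw]

lemma GoodS.conj {G H S : Subgroup (Equiv.Perm (Vtx A 0))} (hGa : G ≤ treeAut A 0)
    {c : Equiv.Perm (Vtx A 0)} (hc : c ∈ G) (hS : GoodS G H S) : GoodS G H (conjSub c S) := by
  constructor
  · intro x hx
    have h1 : c⁻¹ * x * c ∈ Cgrp G H := hS.leC (mem_conjSub.mp hx)
    have h2 := Cgrp_conj hc h1
    have h3 : c * (c⁻¹ * x * c) * c⁻¹ = x := by group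
    rwa [h3] at h2
  · intro c' hc' x hx
    rw [mem_conjSub] at hx ⊢
    have hd : c⁻¹ * c' * c ∈ Cgrp G H := by
      have h := Cgrp_conj (G.inv_mem hc) hc'
      convert h using 1
      group
    have h2 := hS.conjC _ hd _ hx
    convert h2 using 1
    group
  · intro v
    obtain ⟨x', hx'S, hx'ne, hx's⟩ := hS.rists ((c⁻¹ : Equiv.Perm (Vtx A 0)) v)
    refine ⟨c * x' * c⁻¹, ?_, ?_, ?_⟩
    · rw [mem_conjSub]
      have h : c⁻¹ * (c * x' * c⁻¹) * c = x' := by group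
      rwa [h]
    · intro hone
      apply hx'ne
      have h : x' = c⁻¹ * (c * x' * c⁻¹) * c := by group
      rw [hone] at h
      simpa using h
    · intro w hw
      have hcinv : c⁻¹ ∈ treeAut A 0 := hGa (G.inv_mem hc)
      have h1 : ¬ Vtx.Pre ((c⁻¹ : Equiv.Perm (Vtx A 0)) v) ((c⁻¹ : Equiv.Perm (Vtx A 0)) w) :=
        fun hh => hw (((mem_treeAut'.mp hcinv).2 v w).mp hh)
      rw [Equiv.Perm.mul_apply, Equiv.Perm.mul_apply]
      rw [hx's _ h1, Equiv.Perm.apply_inv_self]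

/-- Ordered partial products of a family of permutations selected by a boolean vector. -/
def pprod (g : ℕ → Equiv.Perm (Vtx A 0)) (ε : ℕ → Bool) : ℕ → Equiv.Perm (Vtx A 0)
  | 0 => 1
  | (k+1) => pprod g ε k * (if ε k then g k else 1)

lemma pprod_mem {S : Subgroup (Equiv.Perm (Vtx A 0))} {g : ℕ → Equiv.Perm (Vtx A 0)}
    (hg : ∀ i, g i ∈ S) (ε : ℕ → Bool) : ∀ k, pprod g ε k ∈ S := by
  intro k
  induction k with
  | zero => exact S.one_mem
  | succ k ih =>
    simp only [pprod]
    refine S.mul_mem ih ?_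
    split
    · exact hg k
    · exact S.one_mem

lemma pprod_fix {g : ℕ → Equiv.Perm (Vtx A 0)} {w : ℕ → Vtx A 0}
    (hs : ∀ i, SuppIn (g i) (w i)) (ε : ℕ → Bool) :
    ∀ k (x : Vtx A 0), (∀ j, j < k → ¬ Vtx.Pre (w j) x) → pprod g ε k x = x := by
  intro k
  induction k with
  | zero => intro x _; rfl
  | succ k ih =>
    intro x hx
    simp only [pprod, Equiv.Perm.mul_apply]
    have hfix : (if ε k then g k else 1) x = x := by
      split
      · exact hs k x (hx k (Nat.lt_succ_self k))
      · rfl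
    rw [hfix]
    exact ih x (fun j hj => hx j (hj.trans (Nat.lt_succ_self k)))

lemma pprod_eval {g : ℕ → Equiv.Perm (Vtx A 0)} {w : ℕ → Vtx A 0}
    (hs : ∀ i, SuppIn (g i) (w i))
    (hinc : ∀ i j, i ≠ j → ¬ Vtx.Pre (w i) (w j)) (ε : ℕ → Bool) :
    ∀ k i (x : Vtx A 0), i < k → Vtx.Pre (w i) x →
      pprod g ε k x = (if ε i then g i else 1) x := by
  have zone_excl : ∀ i j (x : Vtx A 0), i ≠ j → Vtx.Pre (w i) x → ¬ Vtx.Pre (w j) x := by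
    intro i j x hne h1 h2
    rcases pre_or_pre h1 h2 with h | h
    · exact hinc i j hne h
    · exact hinc j i (Ne.symm hne) h
  intro k
  induction k with
  | zero => intro i x hi _; omega
  | succ k ih =>
    intro i x hik hx
    simp only [pprod, Equiv.Perm.mul_apply]
    rcases Nat.lt_or_ge i k with hlt | hge
    · have hfix : (if ε k then g k else 1) x = x := by
        split
        · exact hs k x (zone_excl i k x (Nat.ne_of_lt hlt) hx)
        · rfl
      rw [hfix]
      exact ih i x hlt hx
    · have hik' : i = k := by omega
      subst hik'
      by_cases hε : ε i = true
      · rw [if_pos hε]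
        have hz : Vtx.Pre (w i) (g i x) := (hs i).zone hx
        exact pprod_fix hs ε i (g i x) (fun j hj => zone_excl i j _ (by omega) hz)
      · rw [if_neg hε, Equiv.Perm.one_apply]
        exact pprod_fix hs ε i x (fun j hj => zone_excl i j _ (by omega) hx)

end Aux
section Aux2

open Vtx

variable {A : ℕ → Type*}

/-- Below any vertex there is an infinite family of pairwise incomparable vertices. -/
lemma exists_incomp_family [∀ i, Fintype (A i)] (hA : ∀ i, 2 ≤ Fintype.card (A i))
    (v : Vtx A 0) :
    ∃ w : ℕ → Vtx A 0, (∀ i, Vtx.Pre v (w i)) ∧ ∀ i j, i ≠ j → ¬ Vtx.Pre (w i) (w j) := by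
  have hpair : ∀ i, ∃ a b : A i, a ≠ b := fun i =>
    Fintype.exists_pair_of_one_lt_card (lt_of_lt_of_le one_lt_two (hA i))
  choose α β hαβ using hpair
  set ℓ := v.len with hℓ
  set tlist : ℕ → List (Σ n, A n) := fun i =>
    ((List.range i).map (fun j => (⟨ℓ + j, α (ℓ + j)⟩ : Σ n, A n))) ++
      [⟨ℓ + i, β (ℓ + i)⟩] with htlist
  have htlen : ∀ i, (tlist i).length = i + 1 := by
    intro i; simp [htlist]
  have htail : ∀ i : ℕ, ∀ j (h : j < (tlist i).length), (((tlist i))[j]'h).1 = j + ℓ := by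
    intro i j h
    rw [htlen] at h
    by_cases hj : j < i
    · simp only [htlist]
      rw [List.getElem_append_left (by simpa using hj)]
      simp only [List.getElem_map, List.getElem_range]
      omega
    · have hj' : j = i := by omega
      subst hj'
      simp only [htlist]
      rw [List.getElem_append_right (by simpa using le_refl j)]
      simp only [List.length_map, List.length_range, Nat.sub_self, List.getElem_cons_zero]
      omega
  set tl : ℕ → Vtx A ℓ := fun i => ⟨tlist i, htail i⟩ with htl
  set w : ℕ → Vtx A 0 := fun i => Vtx.cat v (tl i) with hw
  have hgeti : ∀ i, ∀ (h : i < (tlist i).length),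
      (tlist i)[i]'h = (⟨ℓ + i, β (ℓ + i)⟩ : Σ n, A n) := by
    intro i h
    simp only [htlist]
    rw [List.getElem_append_right (by simpa using le_refl i)]
    simp
  have hgetj : ∀ i j, i < j → ∀ (h : i < (tlist j).length),
      (tlist j)[i]'h = (⟨ℓ + i, α (ℓ + i)⟩ : Σ n, A n) := by
    intro i j hij h
    simp only [htlist]
    rw [List.getElem_append_left (by simpa using hij)]
    simp only [List.getElem_map]
    rw [List.getElem_range]
  refine ⟨w, fun i => Vtx.pre_cat v (tl i), ?_⟩
  have main : ∀ i j, i < j → ¬ Vtx.Pre (w i) (w j) := by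
    intro i j hij hpre
    have hpre' : tlist i <+: tlist j := by
      have h0 : v.1 ++ tlist i <+: v.1 ++ tlist j := hpre
      exact (List.prefix_append_right_inj v.1).mp h0
    have hl1 : i < (tlist i).length := by rw [htlen]; omega
    have hl2 : i < (tlist j).length := by rw [htlen]; omega
    have heq := List.IsPrefix.getElem hpre' hl1
    rw [hgeti i hl1, hgetj i j hij hl2] at heq
    injection heq with h1 h2
    exact hαβ (ℓ + i) h2.symm
  intro i j hij
  rcases Nat.lt_or_ge i j with h | h
  · exact main i j h
  · have hji : j < i := by omega
    intro hpre
    have hpre' : tlist i <+: tlist j := by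
      have h0 : v.1 ++ tlist i <+: v.1 ++ tlist j := hpre
      exact (List.prefix_append_right_inj v.1).mp h0
    have := List.IsPrefix.length_le hpre'
    rw [htlen, htlen] at this
    omega

/-- Key pigeonhole step: the rigid stabiliser of `K ⊓ Cgrp G H` at any vertex is
nontrivial. -/
lemma rist_inf_core_nontrivial [∀ i, Fintype (A i)] (hA : ∀ i, 2 ≤ Fintype.card (A i))
    {G H K : Subgroup (Equiv.Perm (Vtx A 0))}
    (hHG : H ≤ G) (hfi : H.relIndex G ≠ 0) (hK : NormalIn H K)
    (hrist : ∀ v : Vtx A 0, rist K v ≠ ⊥) (v : Vtx A 0) :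
    ∃ x ∈ K ⊓ Cgrp G H, x ≠ 1 ∧ SuppIn x v := by
  classical
  obtain ⟨w, hpre, hinc⟩ := exists_incomp_family hA v
  have hg : ∀ i, ∃ g, g ∈ rist K (w i) ∧ g ≠ 1 := by
    intro i
    by_contra hcon
    push_neg at hcon
    exact hrist (w i) ((rist K (w i)).eq_bot_iff_forall.mpr hcon)
  choose g hgmem hgne using hg
  have hsupp : ∀ i, SuppIn (g i) (w i) := fun i => rist_suppIn (hgmem i)
  have hgrv : ∀ i, g i ∈ rist K v := fun i => rist_mono' (hpre i) (hgmem i)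
  haveI hHfi : (H.subgroupOf G).FiniteIndex := ⟨hfi⟩
  set N' := (H.subgroupOf G).normalCore with hN'
  haveI hN'fi : N'.FiniteIndex := Subgroup.finiteIndex_normalCore _
  haveI hfin : Finite (↥G ⧸ N') := inferInstance
  haveI := Fintype.ofFinite (↥G ⧸ N')
  set n := Fintype.card (↥G ⧸ N') with hn
  set εh : (Fin n → Bool) → (ℕ → Bool) :=
    fun d i => if h : i < n then d ⟨i, h⟩ else false with hεh
  have hpmemG : ∀ d : Fin n → Bool, pprod g (εh d) n ∈ G :=
    fun d => hHG (hK.1 (rist_le' (pprod_mem hgrv (εh d) n)))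
  set Φ : (Fin n → Bool) → (↥G ⧸ N') :=
    fun d => QuotientGroup.mk ⟨pprod g (εh d) n, hpmemG d⟩ with hΦ
  obtain ⟨d1, d2, hdne, hdeq⟩ := Fintype.exists_ne_map_eq_of_card_lt Φ (by
    rw [Fintype.card_fun, Fintype.card_bool, Fintype.card_fin]
    exact Nat.lt_two_pow_self)
  have hmem1 : pprod g (εh d1) n ∈ rist K v := pprod_mem hgrv (εh d1) n
  have hmem2 : pprod g (εh d2) n ∈ rist K v := pprod_mem hgrv (εh d2) n
  set p1 := pprod g (εh d1) n with hp1
  set p2 := pprod g (εh d2) n with hp2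
  have hN'mem : (⟨p1, hpmemG d1⟩ : ↥G)⁻¹ * ⟨p2, hpmemG d2⟩ ∈ N' := QuotientGroup.eq.mp hdeq
  have hxrist : p1⁻¹ * p2 ∈ rist K v :=
    (rist K v).mul_mem ((rist K v).inv_mem hmem1) hmem2
  refine ⟨p1⁻¹ * p2, ?_, ?_, rist_suppIn hxrist⟩
  · rw [Subgroup.mem_inf]
    refine ⟨rist_le' hxrist, mem_Cgrp.mpr ⟨?_, ?_⟩⟩
    · exact G.mul_mem (G.inv_mem (hpmemG d1)) (hpmemG d2)
    · intro c hc
      have hcore : ∀ b : ↥G,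
          b * ((⟨p1, hpmemG d1⟩ : ↥G)⁻¹ * ⟨p2, hpmemG d2⟩) * b⁻¹ ∈ H.subgroupOf G := hN'mem
      have h2 := hcore ⟨c, hc⟩
      rw [Subgroup.mem_subgroupOf] at h2
      simpa using h2
  · obtain ⟨i, hi⟩ := Function.ne_iff.mp hdne
    obtain ⟨x0, hx0⟩ : ∃ x0, g i.1 x0 ≠ x0 := by
      by_contra hcon
      push_neg at hcon
      exact hgne i.1 (Equiv.ext hcon)
    have hx0pre : Vtx.Pre (w i.1) x0 := by
      by_contra hc
      exact hx0 (hsupp i.1 x0 hc)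
    have hev1 : p1 x0 = (if εh d1 i.1 then g i.1 else 1) x0 :=
      pprod_eval hsupp hinc (εh d1) n i.1 x0 i.2 hx0pre
    have hev2 : p2 x0 = (if εh d2 i.1 then g i.1 else 1) x0 :=
      pprod_eval hsupp hinc (εh d2) n i.1 x0 i.2 hx0pre
    have hεh1 : εh d1 i.1 = d1 i := by simp [hεh, i.2]
    have hεh2 : εh d2 i.1 = d2 i := by simp [hεh, i.2]
    have hne12 : p1 x0 ≠ p2 x0 := by
      rw [hev1, hev2, hεh1, hεh2]
      have e1 : (if (false : Bool) = true then g i.1 else 1) x0 = x0 := by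
        rw [if_neg (by simp)]; rfl
      have e2 : (if (true : Bool) = true then g i.1 else 1) x0 = g i.1 x0 := by
        rw [if_pos rfl]
      cases hd1i : d1 i <;> cases hd2i : d2 i
      · rw [hd1i, hd2i] at hi; exact absurd rfl hi
      · rw [e1, e2]; exact fun h => hx0 h.symm
      · rw [e1, e2]; exact hx0
      · rw [hd1i, hd2i] at hi; exact absurd rfl hi
    intro hone
    have heq12 : p1 = p2 := by
      have h3 : p2 = p1 * (p1⁻¹ * p2) := by group
      rw [hone] at h3
      rw [h3, mul_one]
    exact hne12 (by rw [heq12])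

end Aux2
section Aux3

open Vtx

variable {A : ℕ → Type*}

/-- The intersection of all `G`-conjugates of `K` (with a `G`-membership constraint). -/
def coreIn (G K : Subgroup (Equiv.Perm (Vtx A 0))) : Subgroup (Equiv.Perm (Vtx A 0)) where
  carrier := {x | x ∈ G ∧ ∀ c ∈ G, c⁻¹ * x * c ∈ K}
  one_mem' := ⟨G.one_mem, fun c _ => by simpa using K.one_mem⟩
  mul_mem' := by
    rintro a b ⟨haG, ha⟩ ⟨hbG, hb⟩
    refine ⟨G.mul_mem haG hbG, fun c hc => ?_⟩
    have h := K.mul_mem (ha c hc) (hb c hc)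
    convert h using 1
    group
  inv_mem' := by
    rintro a ⟨haG, ha⟩
    refine ⟨G.inv_mem haG, fun c hc => ?_⟩
    have h := K.inv_mem (ha c hc)
    convert h using 1
    group

lemma mem_coreIn {G K : Subgroup (Equiv.Perm (Vtx A 0))} {x} :
    x ∈ coreIn G K ↔ x ∈ G ∧ ∀ c ∈ G, c⁻¹ * x * c ∈ K := Iff.rfl

lemma coreIn_le_G {G K : Subgroup (Equiv.Perm (Vtx A 0))} : coreIn G K ≤ G :=
  fun _ hx => (mem_coreIn.mp hx).1

lemma coreIn_le_K {G K : Subgroup (Equiv.Perm (Vtx A 0))} : coreIn G K ≤ K := by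
  intro x hx
  have h := (mem_coreIn.mp hx).2 1 G.one_mem
  simpa using h

lemma coreIn_conj {G K : Subgroup (Equiv.Perm (Vtx A 0))} {d x : Equiv.Perm (Vtx A 0)}
    (hd : d ∈ G) (hx : x ∈ coreIn G K) : d * x * d⁻¹ ∈ coreIn G K := by
  obtain ⟨hxG, hx2⟩ := mem_coreIn.mp hx
  refine mem_coreIn.mpr ⟨G.mul_mem (G.mul_mem hd hxG) (G.inv_mem hd), fun c hc => ?_⟩
  have h := hx2 (d⁻¹ * c) (G.mul_mem (G.inv_mem hd) hc)
  convert h using 1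
  group

/-- The family of `G`-conjugates of a subgroup normalised by `H` is finite when `H`
has finite index in `G`. -/
lemma conj_family_finite {G H : Subgroup (Equiv.Perm (Vtx A 0))}
    (K₀ : Subgroup (Equiv.Perm (Vtx A 0))) (hfi : H.relIndex G ≠ 0)
    (hnorm : ∀ h ∈ H, ∀ s ∈ K₀, h * s * h⁻¹ ∈ K₀) :
    {S : Subgroup (Equiv.Perm (Vtx A 0)) | ∃ c ∈ G, S = conjSub c K₀}.Finite := by
  classical
  haveI hHfi : (H.subgroupOf G).FiniteIndex := ⟨hfi⟩
  haveI hfin : Finite (↥G ⧸ H.subgroupOf G) := inferInstance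
  have hwell : ∀ (a b : ↥G), (QuotientGroup.leftRel (H.subgroupOf G)) a b →
      conjSub (a : Equiv.Perm (Vtx A 0)) K₀ = conjSub (b : Equiv.Perm (Vtx A 0)) K₀ := by
    intro a b hab
    rw [QuotientGroup.leftRel_apply, Subgroup.mem_subgroupOf] at hab
    have hH : ((a : Equiv.Perm (Vtx A 0))⁻¹ * b) ∈ H := by
      simpa using hab
    ext x
    rw [mem_conjSub, mem_conjSub]
    constructor
    · intro hx
      have h := hnorm _ (H.inv_mem hH) _ hx
      convert h using 1
      group
    · intro hx
      have h := hnorm _ hH _ hx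
      convert h using 1
      group
  set q : (↥G ⧸ H.subgroupOf G) → Subgroup (Equiv.Perm (Vtx A 0)) :=
    Quotient.lift (fun a : ↥G => conjSub (a : Equiv.Perm (Vtx A 0)) K₀) hwell with hq
  have hsub : {S : Subgroup (Equiv.Perm (Vtx A 0)) | ∃ c ∈ G, S = conjSub c K₀} ⊆
      Set.range q := by
    rintro S ⟨c, hc, rfl⟩
    exact ⟨QuotientGroup.mk ⟨c, hc⟩, rfl⟩
  exact (Set.finite_range q).subset hsub

lemma good_sInf {G H : Subgroup (Equiv.Perm (Vtx A 0))} (hGa : G ≤ treeAut A 0)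
    (𝒮 : Set (Subgroup (Equiv.Perm (Vtx A 0)))) (hfin : 𝒮.Finite) :
    (∀ S ∈ 𝒮, GoodS G H S) → ∀ T, GoodS G H T → GoodS G H (T ⊓ sInf 𝒮) := by
  refine Set.Finite.induction_on
    (motive := fun 𝒮 _ => (∀ S ∈ 𝒮, GoodS G H S) → ∀ T, GoodS G H T → GoodS G H (T ⊓ sInf 𝒮))
    𝒮 hfin ?_ ?_
  · intro _ T hT
    rw [sInf_empty, inf_top_eq]
    exact hT
  · intro S 𝒮' hnmem hfin' ih hall T hT
    rw [sInf_insert, ← inf_assoc]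
    exact ih (fun S' hS' => hall S' (Set.mem_insert_of_mem _ hS'))
      (T ⊓ S) (hT.inf hGa (hall S (Set.mem_insert _ _)))

/-- The core of `K` in `G` contains a nontrivial element. -/
lemma coreIn_nontrivial [∀ i, Fintype (A i)] (hA : ∀ i, 2 ≤ Fintype.card (A i))
    {G H K : Subgroup (Equiv.Perm (Vtx A 0))} (hGa : G ≤ treeAut A 0)
    (hHG : H ≤ G) (hfi : H.relIndex G ≠ 0) (hK : NormalIn H K)
    (hrist : ∀ v : Vtx A 0, rist K v ≠ ⊥) :
    ∃ x ∈ coreIn G K, x ≠ 1 := by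
  classical
  set K₀ := K ⊓ Cgrp G H with hK₀
  have hnormH : ∀ h ∈ H, ∀ s ∈ K₀, h * s * h⁻¹ ∈ K₀ := by
    intro h hh s hs
    rw [hK₀, Subgroup.mem_inf] at hs ⊢
    exact ⟨hK.2 h hh s hs.1, Cgrp_conj (hHG hh) hs.2⟩
  have hgood : GoodS G H K₀ := by
    constructor
    · exact inf_le_right
    · intro c hc s hs
      exact hnormH c (Cgrp_le_H hc) s hs
    · intro v
      obtain ⟨x, h1, h2, h3⟩ := rist_inf_core_nontrivial hA hHG hfi hK hrist v
      exact ⟨x, h1, h2, h3⟩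
  set 𝒮 := {S : Subgroup (Equiv.Perm (Vtx A 0)) | ∃ c ∈ G, S = conjSub c K₀} with h𝒮
  have hfin𝒮 : 𝒮.Finite := conj_family_finite K₀ hfi hnormH
  have hallgood : ∀ S ∈ 𝒮, GoodS G H S := by
    rintro S ⟨c, hc, rfl⟩
    exact hgood.conj hGa hc
  have hbig : GoodS G H (K₀ ⊓ sInf 𝒮) := good_sInf hGa 𝒮 hfin𝒮 hallgood K₀ hgood
  have hroot : ∃ r : Vtx A 0, True := ⟨⟨[], fun j h => by simp at h⟩, trivial⟩
  obtain ⟨r, -⟩ := hroot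
  obtain ⟨x, hx, hxne, -⟩ := hbig.rists r
  rw [Subgroup.mem_inf] at hx
  refine ⟨x, mem_coreIn.mpr ⟨?_, ?_⟩, hxne⟩
  · exact Cgrp_le_G ((inf_le_right : K₀ ≤ Cgrp G H) hx.1)
  · intro c hc
    have hxc : x ∈ conjSub c K₀ := by
      refine (sInf_le ?_ : sInf 𝒮 ≤ conjSub c K₀) hx.2
      exact ⟨c, hc, rfl⟩
    exact (inf_le_left : K₀ ≤ K) (mem_conjSub.mp hxc)

/-- For fixed `a`, the set of `q` with `⁅a,q⁆ ∈ L` (within `G`) is a subgroup,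
provided `L` is normalised by `G`. -/
def leftCommSub (G L : Subgroup (Equiv.Perm (Vtx A 0)))
    (hnorm : ∀ d ∈ G, ∀ x ∈ L, d * x * d⁻¹ ∈ L) (a : Equiv.Perm (Vtx A 0)) :
    Subgroup (Equiv.Perm (Vtx A 0)) where
  carrier := {q | q ∈ G ∧ a * q * a⁻¹ * q⁻¹ ∈ L}
  one_mem' := ⟨G.one_mem, by
    have h : a * 1 * a⁻¹ * 1⁻¹ = 1 := by group
    rw [h]; exact L.one_mem⟩
  mul_mem' := by
    rintro q r ⟨hqG, hq⟩ ⟨hrG, hr⟩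
    refine ⟨G.mul_mem hqG hrG, ?_⟩
    have h1 : a * (q * r) * a⁻¹ * (q * r)⁻¹ =
        (a * q * a⁻¹ * q⁻¹) * (q * (a * r * a⁻¹ * r⁻¹) * q⁻¹) := by group
    rw [h1]
    exact L.mul_mem hq (hnorm q hqG _ hr)
  inv_mem' := by
    rintro q ⟨hqG, hq⟩
    refine ⟨G.inv_mem hqG, ?_⟩
    have h1 : a * q⁻¹ * a⁻¹ * (q⁻¹)⁻¹ = q⁻¹ * (a * q * a⁻¹ * q⁻¹)⁻¹ * (q⁻¹)⁻¹ := by group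
    rw [h1]
    exact hnorm q⁻¹ (G.inv_mem hqG) _ (L.inv_mem hq)

lemma mem_leftCommSub {G L : Subgroup (Equiv.Perm (Vtx A 0))}
    {hnorm : ∀ d ∈ G, ∀ x ∈ L, d * x * d⁻¹ ∈ L} {a q : Equiv.Perm (Vtx A 0)} :
    q ∈ leftCommSub G L hnorm a ↔ q ∈ G ∧ a * q * a⁻¹ * q⁻¹ ∈ L := Iff.rfl

/-- For fixed `q`, the set of `p` with `⁅p,q⁆ ∈ L` (within `G`) is a subgroup. -/
def rightCommSub (G L : Subgroup (Equiv.Perm (Vtx A 0)))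
    (hnorm : ∀ d ∈ G, ∀ x ∈ L, d * x * d⁻¹ ∈ L) (q : Equiv.Perm (Vtx A 0)) :
    Subgroup (Equiv.Perm (Vtx A 0)) where
  carrier := {p | p ∈ G ∧ p * q * p⁻¹ * q⁻¹ ∈ L}
  one_mem' := ⟨G.one_mem, by
    have h : 1 * q * 1⁻¹ * q⁻¹ = 1 := by group
    rw [h]; exact L.one_mem⟩
  mul_mem' := by
    rintro p r ⟨hpG, hp⟩ ⟨hrG, hr⟩
    refine ⟨G.mul_mem hpG hrG, ?_⟩
    have h1 : (p * r) * q * (p * r)⁻¹ * q⁻¹ =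
        (p * (r * q * r⁻¹ * q⁻¹) * p⁻¹) * (p * q * p⁻¹ * q⁻¹) := by group
    rw [h1]
    exact L.mul_mem (hnorm p hpG _ hr) hp
  inv_mem' := by
    rintro p ⟨hpG, hp⟩
    refine ⟨G.inv_mem hpG, ?_⟩
    have h1 : p⁻¹ * q * (p⁻¹)⁻¹ * q⁻¹ = p⁻¹ * (p * q * p⁻¹ * q⁻¹)⁻¹ * (p⁻¹)⁻¹ := by group
    rw [h1]
    exact hnorm p⁻¹ (G.inv_mem hpG) _ (L.inv_mem hp)

lemma mem_rightCommSub {G L : Subgroup (Equiv.Perm (Vtx A 0))}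
    {hnorm : ∀ d ∈ G, ∀ x ∈ L, d * x * d⁻¹ ∈ L} {q p : Equiv.Perm (Vtx A 0)} :
    p ∈ rightCommSub G L hnorm q ↔ p ∈ G ∧ p * q * p⁻¹ * q⁻¹ ∈ L := Iff.rfl

end Aux3
/-- Let `G` be a weakly branch group, `H ≤ G` of finite index, and `K` a normal
subgroup of `H` such that `rist_K(v)` is nontrivial for every vertex `v`. Then there
exists `n` with `rist_G'(n) ≤ K`. -/
theorem rist_derived_le_of_rist_ne_bot
    (A : ℕ → Type*) [∀ i, Fintype (A i)] (hA : ∀ i, 2 ≤ Fintype.card (A i))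
    (G H K : Subgroup (Equiv.Perm (Vtx A 0))) (hG : IsWeaklyBranch G)
    (hHG : H ≤ G) (hfi : H.relIndex G ≠ 0) (hK : NormalIn H K)
    (hrist : ∀ v : Vtx A 0, rist K v ≠ ⊥) :
    ∃ n : ℕ, ⁅ristLev G n, ristLev G n⁆ ≤ K := by
  classical
  have hGa : G ≤ treeAut A 0 := hG.le_aut
  obtain ⟨g0, hg0, hg0ne⟩ := coreIn_nontrivial hA hGa hHG hfi hK hrist
  obtain ⟨y, hy⟩ : ∃ y, g0 y ≠ y := by
    by_contra hcon; push_neg at hcon; exact hg0ne (Equiv.ext hcon)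
  set L := coreIn G K with hL
  have hnormL : ∀ d ∈ G, ∀ x ∈ L, d * x * d⁻¹ ∈ L := fun d hd x hx => coreIn_conj hd hx
  refine ⟨y.len, ?_⟩
  rw [Subgroup.commutator_le]
  have stepB : ∀ z : Vtx A 0, z.len = y.len → ∀ a ∈ rist G z, ∀ b ∈ rist G z,
      a * b * a⁻¹ * b⁻¹ ∈ L := by
    intro z hzlen a ha b hb
    obtain ⟨c, hcG, hcy⟩ := hG.trans y z hzlen.symm
    have haG : a ∈ G := rist_le' ha
    have hbG : b ∈ G := rist_le' hb
    have hg'L : c * g0 * c⁻¹ ∈ L := hnormL c hcG g0 hg0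
    set g' := c * g0 * c⁻¹ with hg'
    have hg'G : g' ∈ G := coreIn_le_G hg'L
    have hg'aut := mem_treeAut'.mp (hGa hg'G)
    have hczy : (c⁻¹ : Equiv.Perm (Vtx A 0)) z = y := by
      rw [← hcy, Equiv.Perm.inv_apply_self]
    have hg'zval : g' z = c (g0 y) := by
      rw [hg', Equiv.Perm.mul_apply, Equiv.Perm.mul_apply, hczy]
    have hg'z : g' z ≠ z := by
      rw [hg'zval, ← hcy]
      exact fun hh => hy (c.injective hh)
    have hsa : SuppIn a z := rist_suppIn ha
    have hsb : SuppIn b z := rist_suppIn hb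
    have hsconj : SuppIn (g' * a⁻¹ * g'⁻¹) (g' z) := by
      intro w hw
      have h1 : ¬ Vtx.Pre z ((g'⁻¹ : Equiv.Perm (Vtx A 0)) w) := by
        intro hh
        apply hw
        have h2 := (hg'aut.2 z (g'⁻¹ w)).mpr hh
        rwa [Equiv.Perm.apply_inv_self] at h2
      rw [Equiv.Perm.mul_apply, Equiv.Perm.mul_apply]
      rw [hsa.inv _ h1, Equiv.Perm.apply_inv_self]
    have hlenz : (g' z).len = z.len := hg'aut.1 z
    have hcomm : (g' * a⁻¹ * g'⁻¹) * b = b * (g' * a⁻¹ * g'⁻¹) :=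
      commute_of_incomp hsconj hsb (incomp_of_len hlenz hg'z)
        (incomp_of_len hlenz.symm (Ne.symm hg'z))
    have htL : a * (g' * a⁻¹ * g'⁻¹) ∈ L := by
      have h1 : a * (g' * a⁻¹ * g'⁻¹) = (a * g' * a⁻¹) * g'⁻¹ := by group
      rw [h1]
      exact L.mul_mem (hnormL a haG g' hg'L) (L.inv_mem hg'L)
    have hcb : (g' * a⁻¹ * g'⁻¹) * b * (g' * a⁻¹ * g'⁻¹)⁻¹ = b := by
      rw [hcomm]; group
    have key : a * b * a⁻¹ * b⁻¹ =
        (a * (g' * a⁻¹ * g'⁻¹)) * (b * (a * (g' * a⁻¹ * g'⁻¹))⁻¹ * b⁻¹) := by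
      calc a * b * a⁻¹ * b⁻¹
          = a * ((g' * a⁻¹ * g'⁻¹) * b * (g' * a⁻¹ * g'⁻¹)⁻¹) * a⁻¹ * b⁻¹ := by rw [hcb]
        _ = (a * (g' * a⁻¹ * g'⁻¹)) * (b * (a * (g' * a⁻¹ * g'⁻¹))⁻¹ * b⁻¹) := by group
    rw [key]
    exact L.mul_mem htL (hnormL b hbG _ (L.inv_mem htL))
  have stepC : ∀ z : Vtx A 0, z.len = y.len → ∀ a ∈ rist G z, ∀ q ∈ ristLev G y.len,
      a * q * a⁻¹ * q⁻¹ ∈ L := by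
    intro z hz a ha q hq
    have hT : ristLev G y.len ≤ leftCommSub G L hnormL a := by
      have h1 : ristLev G y.len = ⨆ v ∈ {v : Vtx A 0 | v.len = y.len}, rist G v := rfl
      rw [h1]
      refine iSup₂_le fun z' hz' => ?_
      intro q' hq'
      refine mem_leftCommSub.mpr ⟨rist_le' hq', ?_⟩
      by_cases hzz : z' = z
      · subst hzz
        exact stepB z' hz' a ha q' hq'
      · have hcomm : a * q' = q' * a :=
          commute_of_incomp (rist_suppIn ha) (rist_suppIn hq')
            (incomp_of_len (hz.trans (Eq.symm hz')) (Ne.symm hzz))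
            (incomp_of_len ((show z'.len = y.len from hz').trans hz.symm) hzz)
        have h2 : a * q' * a⁻¹ * q'⁻¹ = 1 := by rw [hcomm]; group
        rw [h2]
        exact L.one_mem
    exact (mem_leftCommSub.mp (hT hq)).2
  intro p hp q hq
  have hT2 : ristLev G y.len ≤ rightCommSub G L hnormL q := by
    have h1 : ristLev G y.len = ⨆ v ∈ {v : Vtx A 0 | v.len = y.len}, rist G v := rfl
    rw [h1]
    refine iSup₂_le fun z' hz' => ?_
    intro a ha
    exact mem_rightCommSub.mpr ⟨rist_le' ha, stepC z' hz' a ha q hq⟩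
  have hfinal : p * q * p⁻¹ * q⁻¹ ∈ L := (mem_rightCommSub.mp (hT2 hp)).2
  rw [commutatorElement_def]
  exact coreIn_le_K hfinal
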